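/- Let V be a Hilbert space, M ⊂ V a bounded subset, V_n and W_m finite-dimensional subspaces with β(V_n, W_m) > 0, and A the PBDW reconstruction map. If ε_n = sup_{u∈M} dist(u, V_n), then the worst-case reconstruction error satisfies sup_{u∈M} ‖u − A(P_{W_m} u)‖ ≤ β(V_n, W_m)^{-1} ε_n. -/

import Mathlib

set_option maxHeartbeats 1000000

open Submodule

local notation "⟪" x ", " y "⟫" => @inner ℝ _ _ x y

/-- Geometric key lemma: if `β` is a lower bound of `‖P_Wm v‖/‖v‖` over `Vn`,
then any `η ∈ Wmᗮ` satisfies `β ‖η‖ ≤ dist(η, Vn)`. -/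
lemma pbdw_aux {V : Type*} [NormedAddCommGroup V] [InnerProductSpace ℝ V] [CompleteSpace V]
    (Vn Wm : Submodule ℝ V) [FiniteDimensional ℝ Vn] [FiniteDimensional ℝ Wm]
    (β : ℝ) (hβ0 : 0 ≤ β) (hβ1 : β ≤ 1)
    (hβle : ∀ v : Vn, β * ‖(v : V)‖ ≤ ‖(orthogonalProjection Wm (v : V) : V)‖)
    (η : V) (hη : η ∈ Wmᗮ) :
    β * ‖η‖ ≤ ‖η - (orthogonalProjection Vn η : V)‖ := by
  set v : V := (orthogonalProjection Vn η : V) with hvdef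
  set w : V := η - v with hwdef
  set z : V := (orthogonalProjection Wm v : V) with hzdef
  have hvVn : v ∈ Vn := SetLike.coe_mem _
  have hzW : z ∈ Wm := SetLike.coe_mem _
  have hwperp : w ∈ Vnᗮ := sub_starProjection_mem_orthogonal (K := Vn) η
  have hvz : v - z ∈ Wmᗮ := sub_starProjection_mem_orthogonal (K := Wm) v
  -- inner product facts
  have e1 : ⟪v, w⟫ = 0 := hwperp v hvVn
  have e2 : ⟪z, η⟫ = 0 := hη z hzW
  have e3 : ⟪z, v - z⟫ = 0 := hvz z hzW
  have e3' : ⟪z, v⟫ = ‖z‖ ^ 2 := by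
    have := e3
    rw [inner_sub_right, real_inner_self_eq_norm_sq] at this
    linarith
  have e2' : ⟪z, w⟫ = -‖z‖ ^ 2 := by
    have : ⟪z, v⟫ + ⟪z, w⟫ = 0 := by
      rw [← inner_add_right]
      have : v + w = η := by rw [hwdef]; abel
      rw [this]; exact e2
    linarith [e3']
  -- Pythagoras: ‖v‖² = ‖v-z‖² + ‖z‖²
  have p1 : ‖v‖ ^ 2 = ‖v - z‖ ^ 2 + ‖z‖ ^ 2 := by
    have hv : v = (v - z) + z := by abel
    have horth : ⟪v - z, z⟫ = 0 := by rw [real_inner_comm]; exact e3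
    calc ‖v‖ ^ 2 = ‖(v - z) + z‖ ^ 2 := by rw [← hv]
      _ = ‖v - z‖ ^ 2 + 2 * ⟪v - z, z⟫ + ‖z‖ ^ 2 := norm_add_sq_real _ _
      _ = ‖v - z‖ ^ 2 + ‖z‖ ^ 2 := by rw [horth]; ring
  -- Pythagoras: ‖w‖² = ‖w+z‖² + ‖z‖²
  have p2 : ‖w‖ ^ 2 = ‖w + z‖ ^ 2 + ‖z‖ ^ 2 := by
    have hw : w = (w + z) + (-z) := by abel
    have horth : ⟪w + z, -z⟫ = 0 := by
      rw [inner_neg_right, real_inner_comm, inner_add_right, e2',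
        real_inner_self_eq_norm_sq]
      ring
    calc ‖w‖ ^ 2 = ‖(w + z) + (-z)‖ ^ 2 := by rw [← hw]
      _ = ‖w + z‖ ^ 2 + 2 * ⟪w + z, -z⟫ + ‖-z‖ ^ 2 := norm_add_sq_real _ _
      _ = ‖w + z‖ ^ 2 + ‖z‖ ^ 2 := by rw [horth, norm_neg]; ring
  -- Pythagoras: ‖η‖² = ‖v‖² + ‖w‖²
  have p3 : ‖η‖ ^ 2 = ‖v‖ ^ 2 + ‖w‖ ^ 2 := by
    have hη' : η = v + w := by rw [hwdef]; abel
    calc ‖η‖ ^ 2 = ‖v + w‖ ^ 2 := by rw [← hη']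
      _ = ‖v‖ ^ 2 + 2 * ⟪v, w⟫ + ‖w‖ ^ 2 := norm_add_sq_real _ _
      _ = ‖v‖ ^ 2 + ‖w‖ ^ 2 := by rw [e1]; ring
  -- key identity: ⟪v - z, w + z⟫ = ‖z‖²
  have key : ⟪v - z, w + z⟫ = ‖z‖ ^ 2 := by
    rw [inner_add_right, inner_sub_left, inner_sub_left,
      real_inner_self_eq_norm_sq]
    have h1 : ⟪v, w⟫ = 0 := e1
    have h2 : ⟪z, w⟫ = -‖z‖ ^ 2 := e2'
    have h3 : ⟪v, z⟫ = ‖z‖ ^ 2 := by rw [real_inner_comm]; exact e3'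
    rw [h1, h2, h3]; ring
  -- Cauchy-Schwarz
  have cs : ‖z‖ ^ 2 ≤ ‖v - z‖ * ‖w + z‖ := by
    rw [← key]; exact real_inner_le_norm _ _
  have hβv : β * ‖v‖ ≤ ‖z‖ := hβle (orthogonalProjection Vn η)
  clear_value w z v
  clear hvdef hzdef e1 e2 e3 e3' e2' key hvVn hzW hwperp hvz hη
  -- scalar computation
  have hmain : (β * ‖η‖) ^ 2 ≤ ‖w‖ ^ 2 := by
    have hz0 : (0:ℝ) ≤ ‖z‖ := norm_nonneg _
    have hv0 : (0:ℝ) ≤ ‖v‖ := norm_nonneg _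
    have hw0 : (0:ℝ) ≤ ‖w‖ := norm_nonneg _
    have hpq : ‖z‖ ^ 2 * (‖v‖ ^ 2 + ‖w‖ ^ 2) ≤ ‖v‖ ^ 2 * ‖w‖ ^ 2 := by
      nlinarith [sq_nonneg (‖v - z‖ - ‖w + z‖), sq_nonneg (‖v - z‖ * ‖w + z‖ - ‖z‖^2),
        norm_nonneg (v - z), norm_nonneg (w + z), mul_nonneg (norm_nonneg (v-z)) (norm_nonneg (w+z))]
    have hb2 : β ^ 2 * ‖v‖ ^ 2 ≤ ‖z‖ ^ 2 := by
      nlinarith [mul_self_le_mul_self (mul_nonneg hβ0 hv0) hβv]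
    rcases eq_or_lt_of_le hv0 with hv0' | hv0'
    · -- v = 0
      have hew : ‖η‖ ^ 2 = ‖w‖ ^ 2 := by rw [p3, ← hv0']; ring
      have h1mb : (0:ℝ) ≤ (1 - β ^ 2) * ‖η‖ ^ 2 :=
        mul_nonneg (by nlinarith) (sq_nonneg _)
      nlinarith [h1mb, hew]
    · have hvpos : (0:ℝ) < ‖v‖ ^ 2 := by positivity
      have h2 : β ^ 2 * ‖v‖ ^ 2 * (‖v‖ ^ 2 + ‖w‖ ^ 2) ≤ ‖v‖ ^ 2 * ‖w‖ ^ 2 := by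
        have hsum : (0:ℝ) ≤ ‖v‖ ^ 2 + ‖w‖ ^ 2 := by positivity
        calc β ^ 2 * ‖v‖ ^ 2 * (‖v‖ ^ 2 + ‖w‖ ^ 2)
            ≤ ‖z‖ ^ 2 * (‖v‖ ^ 2 + ‖w‖ ^ 2) := mul_le_mul_of_nonneg_right hb2 hsum
          _ ≤ ‖v‖ ^ 2 * ‖w‖ ^ 2 := hpq
      nlinarith [hvpos, h2]
  have hβη0 : 0 ≤ β * ‖η‖ := mul_nonneg hβ0 (norm_nonneg _)
  have hgoal : β * ‖η‖ ≤ ‖w‖ := by nlinarith [norm_nonneg w]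
  exact hgoal

/-- Worst-case PBDW reconstruction error over a bounded manifold `M`:
if `dist(u, Vₙ) ≤ ε` on `M`, then `‖u − A(P_{Wₘ} u)‖ ≤ β⁻¹ ε` on `M`. -/
theorem pbdw_worst_case_error
    {V : Type*} [NormedAddCommGroup V] [InnerProductSpace ℝ V] [CompleteSpace V]
    (M : Set V) (hM : Bornology.IsBounded M)
    (Vn Wm : Submodule ℝ V) [FiniteDimensional ℝ Vn] [FiniteDimensional ℝ Wm]
    (hβ : 0 < ⨅ v : {v : Vn // (v : V) ≠ 0},
        ‖(orthogonalProjection Wm (v : V) : V)‖ / ‖(v : V)‖)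
    (A : Wm → V)
    -- `A ω` lies in the affine set `ω + Wₘ^⊥` and minimizes the distance to `Vₙ` there
    (hAmem : ∀ ω : Wm, A ω - (ω : V) ∈ Wmᗮ)
    (hAmin : ∀ ω : Wm, ∀ u' : V, u' - (ω : V) ∈ Wmᗮ →
      ‖A ω - (orthogonalProjection Vn (A ω) : V)‖
        ≤ ‖u' - (orthogonalProjection Vn u' : V)‖)
    (ε : ℝ) (hε : ∀ u ∈ M, ‖u - (orthogonalProjection Vn u : V)‖ ≤ ε) :
    ∀ u ∈ M, ‖u - A (orthogonalProjection Wm u)‖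
      ≤ (⨅ v : {v : Vn // (v : V) ≠ 0},
          ‖(orthogonalProjection Wm (v : V) : V)‖ / ‖(v : V)‖)⁻¹ * ε := by
  set β : ℝ := ⨅ v : {v : Vn // (v : V) ≠ 0},
      ‖(orthogonalProjection Wm (v : V) : V)‖ / ‖(v : V)‖ with hβdef
  have hbdd : BddBelow (Set.range fun v : {v : Vn // (v : V) ≠ 0} =>
      ‖(orthogonalProjection Wm (v : V) : V)‖ / ‖(v : V)‖) := by
    refine ⟨0, ?_⟩
    rintro x ⟨i, rfl⟩
    positivity
  have hβle : ∀ v : Vn, β * ‖(v : V)‖ ≤ ‖(orthogonalProjection Wm (v : V) : V)‖ := by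
    intro v
    by_cases hv : (v : V) = 0
    · simp [hv]
    · have h1 : β ≤ ‖(orthogonalProjection Wm (v : V) : V)‖ / ‖(v : V)‖ :=
        ciInf_le hbdd ⟨v, hv⟩
      have hvn : (0:ℝ) < ‖(v : V)‖ := norm_pos_iff.mpr hv
      calc β * ‖(v : V)‖ ≤ (‖(orthogonalProjection Wm (v : V) : V)‖ / ‖(v : V)‖) * ‖(v : V)‖ :=
            mul_le_mul_of_nonneg_right h1 hvn.le
        _ = ‖(orthogonalProjection Wm (v : V) : V)‖ := by field_simp
  have hne : Nonempty {v : Vn // (v : V) ≠ 0} := by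
    by_contra h
    rw [not_nonempty_iff] at h
    rw [hβdef, Real.iInf_of_isEmpty] at hβ
    exact lt_irrefl 0 hβ
  obtain ⟨v₀⟩ := hne
  have hproj_le : ∀ x : V, ‖(orthogonalProjection Wm x : V)‖ ≤ ‖x‖ := by
    intro x
    calc ‖(orthogonalProjection Wm x : V)‖ = ‖orthogonalProjection Wm x‖ := rfl
      _ ≤ ‖orthogonalProjection Wm‖ * ‖x‖ := (orthogonalProjection Wm).le_opNorm x
      _ ≤ 1 * ‖x‖ := by
          exact mul_le_mul_of_nonneg_right (orthogonalProjection_norm_le _) (norm_nonneg _)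
      _ = ‖x‖ := one_mul _
  have hβ1 : β ≤ 1 := by
    have h1 : β ≤ ‖(orthogonalProjection Wm ((v₀ : Vn) : V) : V)‖ / ‖((v₀ : Vn) : V)‖ :=
      ciInf_le hbdd v₀
    have hvn : (0:ℝ) < ‖((v₀ : Vn) : V)‖ := norm_pos_iff.mpr v₀.prop
    have h2 : ‖(orthogonalProjection Wm ((v₀ : Vn) : V) : V)‖ / ‖((v₀ : Vn) : V)‖ ≤ 1 := by
      rw [div_le_one hvn]
      exact hproj_le _
    linarith
  clear_value β
  intro u hu
  set ω : Wm := orthogonalProjection Wm u with hωdef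
  set us : V := A ω with husdef
  have hωu : u - (ω : V) ∈ Wmᗮ := sub_starProjection_mem_orthogonal (K := Wm) u
  have hAu : us - (ω : V) ∈ Wmᗮ := hAmem ω
  set η : V := u - us with hηdef
  have hηW : η ∈ Wmᗮ := by
    have := Submodule.sub_mem _ hωu hAu
    have heq : (u - (ω : V)) - (us - (ω : V)) = η := by rw [hηdef]; abel
    rwa [heq] at this
  -- notation for residuals
  set Qu : V := u - (orthogonalProjection Vn u : V) with hQudef
  set Qus : V := us - (orthogonalProjection Vn us : V) with hQusdef
  set Qη : V := η - (orthogonalProjection Vn η : V) with hQηdef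
  have hQlin : Qη = Qu - Qus := by
    rw [hQηdef, hQudef, hQusdef, hηdef]
    have : orthogonalProjection Vn (u - us) =
        orthogonalProjection Vn u - orthogonalProjection Vn us := map_sub _ _ _
    rw [this]
    push_cast
    abel
  clear_value Qη Qus Qu η us ω
  -- variational orthogonality: ⟪Qus, Qη⟫ = 0
  have horthvar : ⟪Qus, Qη⟫ = 0 := by
    have hmin : ∀ t : ℝ, ‖Qus‖ ≤ ‖Qus + t • Qη‖ := by
      intro t
      have hmem : (us + t • η) - (ω : V) ∈ Wmᗮ := by
        have : (us + t • η) - (ω : V) = (us - (ω : V)) + t • η := by abel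
        rw [this]
        exact Submodule.add_mem _ hAu (Submodule.smul_mem _ _ hηW)
      have := hAmin ω (us + t • η) hmem
      have hproj : orthogonalProjection Vn (us + t • η) =
          orthogonalProjection Vn us + t • orthogonalProjection Vn η := by
        rw [map_add, map_smul]
      have heq : (us + t • η) - (orthogonalProjection Vn (us + t • η) : V)
          = Qus + t • Qη := by
        rw [hproj]
        simp only [Submodule.coe_add, Submodule.coe_smul, hQusdef, hQηdef, smul_sub]
        abel
      rw [← husdef, ← hQusdef, heq] at this
      exact this
    by_cases hQη0 : Qη = 0
    · simp [hQη0]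
    · have hQηn : (0:ℝ) < ‖Qη‖ ^ 2 := pow_pos (norm_pos_iff.mpr hQη0) 2
      set c : ℝ := ⟪Qus, Qη⟫ with hcdef
      have hmin' := hmin (-c / ‖Qη‖ ^ 2)
      have hexp : ‖Qus + (-c / ‖Qη‖ ^ 2) • Qη‖ ^ 2
          = ‖Qus‖ ^ 2 - c ^ 2 / ‖Qη‖ ^ 2 := by
        have h1 : ⟪Qus, (-c / ‖Qη‖ ^ 2) • Qη⟫ = (-c / ‖Qη‖ ^ 2) * c := by
          rw [real_inner_smul_right]
        have hne : ‖Qη‖ ^ 2 ≠ 0 := ne_of_gt hQηn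
        rw [norm_add_sq_real, h1, norm_smul, Real.norm_eq_abs, mul_pow, sq_abs]
        field_simp
        ring
      have h2 : ‖Qus‖ ^ 2 ≤ ‖Qus + (-c / ‖Qη‖ ^ 2) • Qη‖ ^ 2 :=
        pow_le_pow_left₀ (norm_nonneg _) hmin' 2
      rw [hexp] at h2
      have h3 : c ^ 2 / ‖Qη‖ ^ 2 ≤ 0 := by linarith
      have h4 : c ^ 2 = c ^ 2 / ‖Qη‖ ^ 2 * ‖Qη‖ ^ 2 := by field_simp
      have h5 : c ^ 2 ≤ 0 := by nlinarith [mul_le_mul_of_nonneg_right h3 hQηn.le]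
      exact sq_eq_zero_iff.mp (le_antisymm h5 (sq_nonneg c))
  -- ‖Qη‖ ≤ ε
  have hQu : ‖Qu‖ ≤ ε := by rw [hQudef]; exact hε u hu
  have hQη : ‖Qη‖ ≤ ε := by
    have h1 : ‖Qη‖ ^ 2 = ⟪Qu, Qη⟫ := by
      have hsplit : ⟪Qu, Qη⟫ - ⟪Qus, Qη⟫ = ⟪Qη, Qη⟫ := by
        rw [← inner_sub_left, ← hQlin]
      have hself : ⟪Qη, Qη⟫ = ‖Qη‖ ^ 2 := real_inner_self_eq_norm_sq _
      linarith [horthvar, hsplit, hself]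
    have h2 : ⟪Qu, Qη⟫ ≤ ‖Qu‖ * ‖Qη‖ := real_inner_le_norm _ _
    by_cases hz : ‖Qη‖ = 0
    · rw [hz]; linarith [norm_nonneg Qu]
    · have hzpos : (0:ℝ) < ‖Qη‖ := lt_of_le_of_ne (norm_nonneg _) (Ne.symm hz)
      nlinarith
  -- combine
  have hkey : β * ‖η‖ ≤ ‖Qη‖ := by
    have := pbdw_aux Vn Wm β hβ.le hβ1 hβle η hηW
    rwa [← hQηdef] at this
  have hfinal : β * ‖η‖ ≤ ε := le_trans hkey hQη
  have : ‖η‖ ≤ β⁻¹ * ε := by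
    rw [inv_mul_eq_div, le_div_iff₀ hβ]
    linarith [hfinal]
  simpa [hηdef, husdef, hωdef] using this
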